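/- Let s and t be positive real numbers with s ≠ t, and let (c_n)_{n∈ℕ} be a nonincreasing sequence of strictly positive real numbers with c_n → 0. Put K = ℓ²(ℕ) and H = K ⊕ K. Let A be the diagonal operator on K with diagonals (c_n^s)_n and B the diagonal operator with diagonals (c_n^t)_n. Then the system (H; K ⊕ 0, graph(A)) is not boundedly isomorphic to (H; K ⊕ 0, graph(B)). -/

import Mathlib

set_option maxHeartbeats 1000000


/- STATEMENT 6: Let s ≠ t be positive reals and (cₙ) a nonincreasing positive null
sequence. With A, B the diagonal operators on K = ℓ²(ℕ) with diagonals (cₙ^s)ₙ and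
(cₙ^t)ₙ, the systems (K ⊕ K; K ⊕ 0, graph A) and (K ⊕ K; K ⊕ 0, graph B) are not
boundedly isomorphic. -/

noncomputable section

abbrev K : Type := lp (fun _ : ℕ => ℂ) 2

/-- The graph of the diagonal operator with diagonals `a`, as a subspace of `K × K`. -/
def diagGraph (a : ℕ → ℂ) : Submodule ℂ (K × K) where
  carrier := {p | ∀ n, p.2 n = a n * p.1 n}
  add_mem' := by
    intro p q hp hq n
    simp only [Prod.snd_add, Prod.fst_add, lp.coeFn_add, Pi.add_apply, hp n, hq n]
    ring
  zero_mem' := by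
    intro n
    simp [lp.coeFn_zero]
  smul_mem' := by
    intro c p hp n
    simp only [Prod.smul_snd, Prod.smul_fst, lp.coeFn_smul, Pi.smul_apply, hp n, smul_eq_mul]
    ring

/-- The subspace K ⊕ 0 of K ⊕ K. -/
def firstSummand : Submodule ℂ (K × K) := (⊤ : Submodule ℂ K).prod (⊥ : Submodule ℂ K)

lemma lp_norm_mono {f g : K} (h : ∀ k, ‖f k‖ ≤ ‖g k‖) : ‖f‖ ≤ ‖g‖ := by
  have hp : 0 < (2 : ENNReal).toReal := by norm_num
  rw [lp.norm_eq_tsum_rpow hp f, lp.norm_eq_tsum_rpow hp g]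
  refine Real.rpow_le_rpow (tsum_nonneg fun i => Real.rpow_nonneg (norm_nonneg _) _)
    (Summable.tsum_le_tsum (fun i => Real.rpow_le_rpow (norm_nonneg _) (h i) hp.le)
      ((lp.memℓp f).summable hp) ((lp.memℓp g).summable hp)) (by norm_num)

lemma norm_pair_zero_left (y : K) : ‖((0 : K), y)‖ = ‖y‖ := by
  rw [Prod.norm_def, norm_zero]
  exact max_eq_right (norm_nonneg y)

lemma mem_diagGraph {a : ℕ → ℂ} {p : K × K} :
    p ∈ diagGraph a ↔ ∀ n, p.2 n = a n * p.1 n := Iff.rfl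

lemma key (s t : ℝ) (hs : 0 < s) (ht : 0 < t) (hst : s < t)
    (c : ℕ → ℝ) (hc_anti : Antitone c) (hc_pos : ∀ n, 0 < c n)
    (hc_lim : Filter.Tendsto c Filter.atTop (nhds 0))
    (V : (K × K) ≃L[ℂ] (K × K))
    (hV1 : V '' (firstSummand : Set (K × K)) = (firstSummand : Set (K × K)))
    (hV2 : V '' ((diagGraph fun n : ℕ => ((c n ^ s : ℝ) : ℂ)) : Set (K × K)) =
      ((diagGraph fun n : ℕ => ((c n ^ t : ℝ) : ℂ)) : Set (K × K))) : False := by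
  set a : ℕ → ℂ := fun n : ℕ => ((c n ^ s : ℝ) : ℂ) with ha
  set b : ℕ → ℂ := fun n : ℕ => ((c n ^ t : ℝ) : ℂ) with hb
  have hnorm_a : ∀ k, ‖a k‖ = c k ^ s := by
    intro k
    simp only [ha]
    rw [Complex.norm_real, Real.norm_of_nonneg (Real.rpow_nonneg (hc_pos k).le s)]
  have hnorm_b : ∀ k, ‖b k‖ = c k ^ t := by
    intro k
    simp only [hb]
    rw [Complex.norm_real, Real.norm_of_nonneg (Real.rpow_nonneg (hc_pos k).le t)]
  set Vc : (K × K) →L[ℂ] (K × K) := (V : (K × K) →L[ℂ] (K × K)) with hVc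
  set Vs : (K × K) →L[ℂ] (K × K) := (V.symm : (K × K) →L[ℂ] (K × K)) with hVs
  set C : ℝ := ‖Vs‖ * ‖Vc‖ * (1 + c 0 ^ s) with hCdef
  have hmain : ∀ n : ℕ, c n ^ s ≤ C * c n ^ t := by
    intro n
    set p : Fin (n + 1) → K × K :=
      fun k => (lp.single 2 (k : ℕ) (1 : ℂ), lp.single 2 (k : ℕ) (a k)) with hp
    have hp_mem : ∀ k, p k ∈ diagGraph a := by
      intro k
      rw [mem_diagGraph]
      intro m
      rcases eq_or_ne m (k : ℕ) with rfl | hm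
      · simp [hp, lp.single_apply_self]
      · simp [hp, lp.single_apply_ne _ _ _ hm, Pi.single_apply, hm]
    obtain ⟨l, hlker, hl0⟩ : ∃ l : Fin (n + 1) → ℂ,
        (∀ m : Fin n, (V (∑ k, l k • p k)).1 (m : ℕ) = 0) ∧ l ≠ 0 := by
      set Φ : (Fin (n + 1) → ℂ) →ₗ[ℂ] (Fin n → ℂ) :=
        { toFun := fun l => fun m => (V (∑ k, l k • p k)).1 (m : ℕ)
          map_add' := by
            intro x y
            funext m
            simp [add_smul, Finset.sum_add_distrib]
          map_smul' := by
            intro r x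
            funext m
            simp only [Pi.smul_apply, smul_eq_mul, mul_smul, ← Finset.smul_sum, map_smul,
              Prod.smul_fst, lp.coeFn_smul, RingHom.id_apply] } with hΦ
      have hker : LinearMap.ker Φ ≠ ⊥ :=
        LinearMap.ker_ne_bot_of_finrank_lt (by simp [Module.finrank_fin_fun])
      obtain ⟨l, hlk, hl0⟩ := (LinearMap.ker Φ).ne_bot_iff.mp hker
      exact ⟨l, fun m => congrFun (LinearMap.mem_ker.mp hlk) m, hl0⟩
    set z : K × K := ∑ k, l k • p k with hz
    have hz_mem : z ∈ diagGraph a :=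
      Submodule.sum_mem _ fun k _ => Submodule.smul_mem _ _ (hp_mem k)
    have hz2 : ∀ m : ℕ, z.2 m = a m * z.1 m := mem_diagGraph.mp hz_mem
    have hz1 : ∀ m : ℕ, z.1 m = ∑ k : Fin (n + 1), l k * (lp.single 2 (k : ℕ) (1 : ℂ) : K) m := by
      intro m
      have h1 : z.1 = ∑ k : Fin (n + 1), l k • (lp.single 2 (k : ℕ) (1 : ℂ)) := by
        simp only [hz, Prod.fst_sum, Prod.smul_fst, hp]
      rw [h1, lp.coeFn_sum, Finset.sum_apply]
      simp [lp.coeFn_smul]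
    have hz1_fin : ∀ k0 : Fin (n + 1), z.1 (k0 : ℕ) = l k0 := by
      intro k0
      rw [hz1, Finset.sum_eq_single k0]
      · simp [lp.single_apply_self]
      · intro k _ hk
        rw [lp.single_apply_ne _ _ _ (fun h => hk (Fin.val_injective h).symm)]
        ring
      · simp
    have hz1_big : ∀ m : ℕ, n < m → z.1 m = 0 := by
      intro m hm
      rw [hz1]
      apply Finset.sum_eq_zero
      intro k _
      have hk := k.isLt
      rw [lp.single_apply_ne _ _ _ (by omega : m ≠ (k : ℕ))]
      ring
    have hz1_ne : z.1 ≠ 0 := by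
      obtain ⟨k0, hk0⟩ := Function.ne_iff.mp hl0
      intro h
      apply hk0
      have h2 := hz1_fin k0
      rw [h] at h2
      simpa using h2.symm
    have hz1_pos : 0 < ‖z.1‖ := norm_pos_iff.mpr hz1_ne
    have hVz_mem : V z ∈ diagGraph b := by
      have : V z ∈ (diagGraph b : Set (K × K)) := by
        rw [← hV2]
        exact Set.mem_image_of_mem V hz_mem
      exact this
    have hVz2 : ∀ m : ℕ, (V z).2 m = b m * (V z).1 m := mem_diagGraph.mp hVz_mem
    -- (N3)
    have hN3 : c n ^ s * ‖z.1‖ ≤ ‖z.2‖ := by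
      have hpt : ∀ k, ‖(((c n ^ s : ℝ) : ℂ) • z.1) k‖ ≤ ‖z.2 k‖ := by
        intro k
        rw [lp.coeFn_smul, Pi.smul_apply, hz2 k]
        rcases le_or_gt k n with hk | hk
        · rw [norm_smul, norm_mul, hnorm_a k, Complex.norm_real,
            Real.norm_of_nonneg (Real.rpow_nonneg (hc_pos n).le s)]
          exact mul_le_mul_of_nonneg_right
            (Real.rpow_le_rpow (hc_pos n).le (hc_anti hk) hs.le) (norm_nonneg _)
        · rw [hz1_big k hk]
          simp
      have h0 := lp_norm_mono hpt
      rwa [norm_smul, Complex.norm_real,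
        Real.norm_of_nonneg (Real.rpow_nonneg (hc_pos n).le s)] at h0
    -- (N7)
    have hN7 : ‖z.2‖ ≤ c 0 ^ s * ‖z.1‖ := by
      have hpt : ∀ k, ‖z.2 k‖ ≤ ‖(((c 0 ^ s : ℝ) : ℂ) • z.1) k‖ := by
        intro k
        rw [lp.coeFn_smul, Pi.smul_apply, hz2 k, norm_smul, norm_mul, hnorm_a k,
          Complex.norm_real, Real.norm_of_nonneg (Real.rpow_nonneg (hc_pos 0).le s)]
        exact mul_le_mul_of_nonneg_right
          (Real.rpow_le_rpow (hc_pos k).le (hc_anti (Nat.zero_le k)) hs.le) (norm_nonneg _)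
      have h0 := lp_norm_mono hpt
      rwa [norm_smul, Complex.norm_real,
        Real.norm_of_nonneg (Real.rpow_nonneg (hc_pos 0).le s)] at h0
    -- (N4)
    have hN4 : ‖(V z).2‖ ≤ c n ^ t * ‖(V z).1‖ := by
      have hpt : ∀ k, ‖(V z).2 k‖ ≤ ‖(((c n ^ t : ℝ) : ℂ) • (V z).1) k‖ := by
        intro k
        rw [lp.coeFn_smul, Pi.smul_apply, hVz2 k]
        rcases lt_or_ge k n with hk | hk
        · rw [hlker ⟨k, hk⟩]
          simp
        · rw [norm_smul, norm_mul, hnorm_b k, Complex.norm_real,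
            Real.norm_of_nonneg (Real.rpow_nonneg (hc_pos n).le t)]
          exact mul_le_mul_of_nonneg_right
            (Real.rpow_le_rpow (hc_pos k).le (hc_anti hk) ht.le) (norm_nonneg _)
      have h0 := lp_norm_mono hpt
      rwa [norm_smul, Complex.norm_real,
        Real.norm_of_nonneg (Real.rpow_nonneg (hc_pos n).le t)] at h0
    -- (N5)
    have hN5 : ‖z.2‖ ≤ ‖Vs‖ * ‖(V z).2‖ := by
      have hw_mem : ((V z).1, (0 : K)) ∈ (firstSummand : Set (K × K)) := by
        simp [firstSummand]
      rw [← hV1] at hw_mem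
      obtain ⟨u, hu1, hu2⟩ := hw_mem
      have hu2' : u.2 = 0 := by
        have h3 : u ∈ firstSummand := hu1
        simp only [firstSummand, Submodule.mem_prod, Submodule.mem_top, Submodule.mem_bot,
          true_and] at h3
        exact h3
      have hkey : z - u = V.symm ((0 : K), (V z).2) := by
        calc z - u = V.symm (V (z - u)) := (V.symm_apply_apply _).symm
        _ = V.symm ((0 : K), (V z).2) := by
            rw [map_sub, hu2]
            congr 1
            ext : 1
            · simp
            · simp
      calc ‖z.2‖ = ‖(z - u).2‖ := by rw [Prod.snd_sub, hu2', sub_zero]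
      _ ≤ ‖z - u‖ := norm_snd_le _
      _ = ‖V.symm ((0 : K), (V z).2)‖ := by rw [hkey]
      _ ≤ ‖Vs‖ * ‖((0 : K), (V z).2)‖ := Vs.le_opNorm _
      _ = ‖Vs‖ * ‖(V z).2‖ := by rw [norm_pair_zero_left]
    -- (N6)
    have hN6 : ‖z‖ ≤ (1 + c 0 ^ s) * ‖z.1‖ := by
      have h1 : 0 ≤ c 0 ^ s := Real.rpow_nonneg (hc_pos 0).le s
      rw [Prod.norm_def]
      apply max_le
      · nlinarith [norm_nonneg z.1]
      · nlinarith [norm_nonneg z.1]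
    have chain : c n ^ s * ‖z.1‖ ≤ (C * c n ^ t) * ‖z.1‖ := by
      have hcnt : 0 ≤ c n ^ t := Real.rpow_nonneg (hc_pos n).le t
      calc c n ^ s * ‖z.1‖ ≤ ‖z.2‖ := hN3
      _ ≤ ‖Vs‖ * ‖(V z).2‖ := hN5
      _ ≤ ‖Vs‖ * (c n ^ t * ‖(V z).1‖) := mul_le_mul_of_nonneg_left hN4 (norm_nonneg _)
      _ ≤ ‖Vs‖ * (c n ^ t * ‖V z‖) := by
          apply mul_le_mul_of_nonneg_left _ (norm_nonneg _)
          exact mul_le_mul_of_nonneg_left (norm_fst_le _) hcnt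
      _ ≤ ‖Vs‖ * (c n ^ t * (‖Vc‖ * ‖z‖)) := by
          apply mul_le_mul_of_nonneg_left _ (norm_nonneg _)
          exact mul_le_mul_of_nonneg_left (Vc.le_opNorm z) hcnt
      _ ≤ ‖Vs‖ * (c n ^ t * (‖Vc‖ * ((1 + c 0 ^ s) * ‖z.1‖))) := by
          apply mul_le_mul_of_nonneg_left _ (norm_nonneg _)
          exact mul_le_mul_of_nonneg_left
            (mul_le_mul_of_nonneg_left hN6 (norm_nonneg _)) hcnt
      _ = (C * c n ^ t) * ‖z.1‖ := by rw [hCdef]; ring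
    exact le_of_mul_le_mul_right chain hz1_pos
  have hCpos : 0 < C := by
    have h0 := hmain 0
    have h1 : 0 < c 0 ^ s := Real.rpow_pos_of_pos (hc_pos 0) s
    have h2 : 0 < c 0 ^ t := Real.rpow_pos_of_pos (hc_pos 0) t
    nlinarith
  set ε : ℝ := (C⁻¹) ^ (t - s)⁻¹ with hεdef
  have hεpos : 0 < ε := Real.rpow_pos_of_pos (inv_pos.mpr hCpos) _
  have hεle : ∀ n, ε ≤ c n := by
    intro n
    have hts : (0 : ℝ) < t - s := by linarith
    have h1 : c n ^ t = c n ^ (t - s) * c n ^ s := by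
      rw [← Real.rpow_add (hc_pos n)]
      ring_nf
    have h2 : 1 * c n ^ s ≤ (C * c n ^ (t - s)) * c n ^ s := by
      have h3 := hmain n
      rw [h1] at h3
      nlinarith
    have h3 : 1 ≤ C * c n ^ (t - s) :=
      le_of_mul_le_mul_right h2 (Real.rpow_pos_of_pos (hc_pos n) s)
    have h4 : C⁻¹ ≤ c n ^ (t - s) := by
      rw [← one_div]
      exact (div_le_iff₀' hCpos).mpr h3
    calc ε ≤ (c n ^ (t - s)) ^ (t - s)⁻¹ :=
          Real.rpow_le_rpow (inv_nonneg.mpr hCpos.le) h4 (inv_nonneg.mpr hts.le)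
    _ = c n := by
        rw [← Real.rpow_mul (hc_pos n).le, mul_inv_cancel₀ hts.ne', Real.rpow_one]
  have hfin := ge_of_tendsto' hc_lim hεle
  linarith

lemma symm_image (V : (K × K) ≃L[ℂ] (K × K)) {S T : Set (K × K)} (h : V '' S = T) :
    V.symm '' T = S := by
  rw [← h]
  ext x
  constructor
  · rintro ⟨y, ⟨u, hu, rfl⟩, rfl⟩
    simpa using hu
  · intro hx
    exact ⟨V x, ⟨x, hx, rfl⟩, by simp⟩

theorem not_boundedly_isomorphic_different_powers
    (s t : ℝ) (hs : 0 < s) (ht : 0 < t) (hst : s ≠ t)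
    (c : ℕ → ℝ) (hc_anti : Antitone c) (hc_pos : ∀ n, 0 < c n)
    (hc_lim : Filter.Tendsto c Filter.atTop (nhds 0)) :
    ¬ ∃ V : (K × K) ≃L[ℂ] (K × K),
        V '' (firstSummand : Set (K × K)) = (firstSummand : Set (K × K)) ∧
        V '' ((diagGraph fun n : ℕ => ((c n ^ s : ℝ) : ℂ)) : Set (K × K)) =
          ((diagGraph fun n : ℕ => ((c n ^ t : ℝ) : ℂ)) : Set (K × K)) := by
  rintro ⟨V, h1, h2⟩
  rcases lt_or_gt_of_ne hst with h | h
  · exact key s t hs ht h c hc_anti hc_pos hc_lim V h1 h2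
  · exact key t s ht hs h c hc_anti hc_pos hc_lim V.symm (symm_image V h1) (symm_image V h2)

end
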